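/- Under the hypotheses of the single-shot unambiguous labeling setup with n = 3 distinct effects: the no-error conditions Tr[Φ_{π'} T_π] = 0 for all π ≠ π' force Tr[ρ M_1] = Tr[ρ M_2] = Tr[ρ M_3] = 0, hence Tr[ρ] = 0, contradicting that ρ is a density operator. -/

import Mathlib

open Matrix Finset Equiv
open scoped ComplexOrder

/-- A density operator: positive semidefinite with unit trace. -/
def IsDensity {d : ℕ} (ρ : Matrix (Fin d) (Fin d) ℂ) : Prop :=
  ρ.PosSemidef ∧ ρ.trace = 1

private lemma psd_trace_nonneg {d : ℕ} {A : Matrix (Fin d) (Fin d) ℂ}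
    (hA : A.PosSemidef) : 0 ≤ A.trace := by
  rw [Matrix.trace]
  refine Finset.sum_nonneg fun i _ => ?_
  exact hA.diag_nonneg

private lemma psd_trace_mul_nonneg {d : ℕ} {A B : Matrix (Fin d) (Fin d) ℂ}
    (hA : A.PosSemidef) (hB : B.PosSemidef) : 0 ≤ (A * B).trace := by
  obtain ⟨C, rfl⟩ : ∃ C : Matrix (Fin d) (Fin d) ℂ, _ = Cᴴ * C := by
    open scoped MatrixOrder Matrix.Norms.L2Operator in
    exact CStarAlgebra.nonneg_iff_eq_star_mul_self.mp hB.nonneg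
  have h1 : (A * (Cᴴ * C)).trace = (C * A * Cᴴ).trace := by
    rw [← Matrix.mul_assoc, Matrix.trace_mul_cycle]
  rw [h1]
  exact psd_trace_nonneg (hA.mul_mul_conjTranspose_same C)

private lemma psd_trace_zero {d : ℕ} {A : Matrix (Fin d) (Fin d) ℂ}
    (hA : A.PosSemidef) (h : A.trace = 0) : A = 0 := by
  obtain ⟨C, rfl⟩ : ∃ C : Matrix (Fin d) (Fin d) ℂ, _ = Cᴴ * C := by
    open scoped MatrixOrder Matrix.Norms.L2Operator in
    exact CStarAlgebra.nonneg_iff_eq_star_mul_self.mp hA.nonneg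
  suffices hC : C = 0 by simp [hC]
  have htr : ∑ i, ∑ k, star (C k i) * C k i = 0 := by
    rw [← h, Matrix.trace]
    simp [Matrix.diag, Matrix.mul_apply, Matrix.conjTranspose_apply]
  have hz : ∀ i ∈ Finset.univ, (∑ k, star (C k i) * C k i) = 0 := by
    rw [← Finset.sum_eq_zero_iff_of_nonneg]
    · exact htr
    · intro i _
      exact Finset.sum_nonneg fun k _ => star_mul_self_nonneg _
  ext k i
  have hz' := (Finset.sum_eq_zero_iff_of_nonneg
    (fun k _ => star_mul_self_nonneg (C k i))).mp (hz i (Finset.mem_univ i)) k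
    (Finset.mem_univ k)
  show C k i = 0
  rcases mul_eq_zero.mp hz' with h'|h'
  · exact star_eq_zero.mp h'
  · exact h'

private lemma exists_perm_ne : ∀ (π : Equiv.Perm (Fin 3)) (k j : Fin 3),
    ∃ π' : Equiv.Perm (Fin 3), π' ≠ π ∧ π' k = j := by decide

/-- Single-shot unambiguous labeling for three distinct effects: the no-error
conditions `Tr[Φ_{π'} T_π] = 0` (for all `π ≠ π'`), for a tester
`T_π = ∑ k H_k^{(π)} ⊗ |k⟩⟨k|` with normalization `∑_π H_k^{(π)} = ρ`, force
`Tr[ρ M₁] = Tr[ρ M₂] = Tr[ρ M₃] = 0`, hence `Tr[ρ] = 0`, contradicting that `ρ`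
is a density operator. -/
theorem three_effect_unambiguous_contradiction
    {d : ℕ}
    (M : Fin 3 → Matrix (Fin d) (Fin d) ℂ)
    (hM : ∀ j, (M j).PosSemidef) (hMsum : ∑ j, M j = 1)
    (hMdist : ∀ j j', j ≠ j' → M j ≠ M j')
    (ρ' : Matrix (Fin d) (Fin d) ℂ) (hρ : IsDensity ρ')
    (H : Fin 3 → Equiv.Perm (Fin 3) → Matrix (Fin d) (Fin d) ℂ)
    (hH : ∀ k π, (H k π).PosSemidef)
    (hHsum : ∀ k, ∑ π : Equiv.Perm (Fin 3), H k π = ρ')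
    (hNoError : ∀ π π' : Equiv.Perm (Fin 3), π ≠ π' →
      ∑ k, ((M k)ᵀ * H (π' k) π).trace = 0) :
    (∀ j, (ρ' * M j).trace = 0) ∧ ρ'.trace = 0 ∧ False := by
  -- Each term in the no-error sums vanishes
  have hterm : ∀ (π π' : Equiv.Perm (Fin 3)), π ≠ π' → ∀ k,
      ((M k)ᵀ * H (π' k) π).trace = 0 := by
    intro π π' hne k
    have hnn : ∀ k ∈ Finset.univ, (0:ℂ) ≤ ((M k)ᵀ * H (π' k) π).trace := by
      intro k _
      exact psd_trace_mul_nonneg (hM k).transpose (hH (π' k) π)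
    exact (Finset.sum_eq_zero_iff_of_nonneg hnn).mp (hNoError π π' hne) k
      (Finset.mem_univ k)
  -- Hence Tr[(M k)ᵀ H j π] = 0 for all k, j, π
  have hall : ∀ (π : Equiv.Perm (Fin 3)) (k j : Fin 3),
      ((M k)ᵀ * H j π).trace = 0 := by
    intro π k j
    obtain ⟨π', hne, hmap⟩ := exists_perm_ne π k j
    have := hterm π π' (fun h => hne h.symm) k
    rwa [hmap] at this
  -- Therefore Tr[H j π] = 0 and hence H j π = 0
  have hHzero : ∀ (j : Fin 3) (π : Equiv.Perm (Fin 3)), H j π = 0 := by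
    intro j π
    apply psd_trace_zero (hH j π)
    have : ∑ k, ((M k)ᵀ * H j π).trace = (H j π).trace := by
      rw [← Matrix.trace_sum]
      congr 1
      rw [← Finset.sum_mul, ← Matrix.transpose_sum, hMsum]
      simp
    rw [← this]
    exact Finset.sum_eq_zero fun k _ => hall π k j
  -- So ρ' = 0, contradicting Tr ρ' = 1
  have hρ0 : ρ' = 0 := by
    rw [← hHsum 0]
    exact Finset.sum_eq_zero fun π _ => hHzero 0 π
  have hFalse : False := by
    have := hρ.2
    rw [hρ0] at this
    simp at this
  exact ⟨fun j => by simp [hρ0], by simp [hρ0], hFalse⟩
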